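/- (Composition–Diamond Lemma) Let k be a field, X a set, < a monomial well-order on the free monoid X*, and S a set of monic elements of the free associative algebra k⟨X⟩. Then S is a Gröbner–Shirshov basis with respect to < (i.e., every intersection composition and every inclusion composition of pairs of elements of S is trivial modulo (S,w)) if and only if the image of Irr(S) = {u ∈ X* : u cannot be written as a s̄ b with s ∈ S and a, b ∈ X*} in the quotient algebra k⟨X⟩/Id(S) is a k-linear basis of k⟨X⟩/Id(S). -/

import Mathlib

variable {k : Type*} [Field k] {X : Type*} [LinearOrder (FreeMonoid X)]

/-- The leading word `f̄` of `f ∈ k⟨X⟩`: the largest word in the support of `f`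
(with junk value `1` for `f = 0`). -/
noncomputable def leadWord (f : MonoidAlgebra k (FreeMonoid X)) : FreeMonoid X :=
  if h : (Finsupp.support f.coeff).Nonempty then (Finsupp.support f.coeff).max' h else 1

/-- `f` is monic: the coefficient of its leading word is `1`. -/
def IsMonic (f : MonoidAlgebra k (FreeMonoid X)) : Prop :=
  f.coeff (leadWord f) = 1

/-- An element `h` is trivial modulo `(S, w)`: `h = Σ αᵢ aᵢ sᵢ bᵢ` with `αᵢ ∈ k`,
`aᵢ, bᵢ ∈ X*`, `sᵢ ∈ S` and `aᵢ s̄ᵢ bᵢ < w`. -/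
def TrivialMod (S : Set (MonoidAlgebra k (FreeMonoid X))) (w : FreeMonoid X)
    (h : MonoidAlgebra k (FreeMonoid X)) : Prop :=
  h ∈ Submodule.span k
    {x : MonoidAlgebra k (FreeMonoid X) |
      ∃ a b : FreeMonoid X, ∃ s ∈ S,
        x = MonoidAlgebra.of k (FreeMonoid X) a * s * MonoidAlgebra.of k (FreeMonoid X) b ∧
          a * leadWord s * b < w}

/-- `S` is a Gröbner–Shirshov basis: every intersection composition and every inclusion
composition of pairs of elements of `S` is trivial modulo `(S, w)`. -/
def IsGroebnerShirshovBasis (S : Set (MonoidAlgebra k (FreeMonoid X))) : Prop :=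
  (∀ f ∈ S, ∀ g ∈ S, ∀ a b w : FreeMonoid X,
      w = leadWord f * b → w = a * leadWord g →
      w.length < (leadWord f).length + (leadWord g).length →
      TrivialMod S w
        (f * MonoidAlgebra.of k (FreeMonoid X) b - MonoidAlgebra.of k (FreeMonoid X) a * g)) ∧
  (∀ f ∈ S, ∀ g ∈ S, ∀ a b : FreeMonoid X,
      leadWord f = a * leadWord g * b →
      TrivialMod S (leadWord f)
        (f - MonoidAlgebra.of k (FreeMonoid X) a * g * MonoidAlgebra.of k (FreeMonoid X) b))

/-- `Irr(S)`: the words that contain no leading word of an element of `S` as a subword. -/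
def IrrSet (S : Set (MonoidAlgebra k (FreeMonoid X))) : Set (FreeMonoid X) :=
  {u : FreeMonoid X | ¬ ∃ s ∈ S, ∃ a b : FreeMonoid X, u = a * leadWord s * b}

/-- The two-sided ideal `Id(S)` of `k⟨X⟩` generated by `S`, as a `k`-submodule. -/
noncomputable def idealOfSet (S : Set (MonoidAlgebra k (FreeMonoid X))) :
    Submodule k (MonoidAlgebra k (FreeMonoid X)) :=
  Submodule.span k
    {x : MonoidAlgebra k (FreeMonoid X) |
      ∃ a b : MonoidAlgebra k (FreeMonoid X), ∃ s ∈ S, x = a * s * b}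

namespace CDLAux

open MonoidAlgebra

/-! ### basic `leadWord` lemmas -/

lemma lw_mem {f : MonoidAlgebra k (FreeMonoid X)} (hf : f ≠ 0) : leadWord f ∈ f.coeff.support := by
  rw [leadWord, dif_pos (Finsupp.support_nonempty_iff.2 (by simpa using hf))]
  exact Finset.max'_mem _ _

lemma le_lw {f : MonoidAlgebra k (FreeMonoid X)} {u : FreeMonoid X} (hu : u ∈ f.coeff.support) :
    u ≤ leadWord f := by
  rw [leadWord, dif_pos ⟨u, hu⟩]
  exact Finset.le_max' _ _ hu

lemma lw_coeff_ne {f : MonoidAlgebra k (FreeMonoid X)} (hf : f ≠ 0) : f.coeff (leadWord f) ≠ 0 :=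
  Finsupp.mem_support_iff.1 (lw_mem hf)

lemma lw_eq {f : MonoidAlgebra k (FreeMonoid X)} {w : FreeMonoid X} (hw : f.coeff w ≠ 0)
    (h : ∀ u ∈ f.coeff.support, u ≤ w) : leadWord f = w := by
  have hf : f ≠ 0 := fun h0 => hw (by simp [h0])
  exact le_antisymm (h _ (lw_mem hf)) (le_lw (Finsupp.mem_support_iff.2 hw))

lemma lw_single {u : FreeMonoid X} {c : k} (hc : c ≠ 0) :
    leadWord (MonoidAlgebra.single u c) = u := by
  apply lw_eq (by simpa using hc)
  intro v hv
  rcases Finset.mem_singleton.1 (Finsupp.support_single_subset hv) with rfl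
  exact le_rfl

lemma monic_ne_zero {s : MonoidAlgebra k (FreeMonoid X)} (hs : IsMonic s) : s ≠ 0 := by
  intro h0
  rw [IsMonic, h0] at hs
  simp at hs

lemma supp_le_of_lt {f : MonoidAlgebra k (FreeMonoid X)} {w : FreeMonoid X}
    (h : ∀ u ∈ f.coeff.support, u ≤ w) {u : FreeMonoid X} (hu : f.coeff u ≠ 0) : u ≤ w :=
  h u (Finsupp.mem_support_iff.2 hu)

/-! ### products with monomials -/

lemma of_eq_single (a : FreeMonoid X) :
    MonoidAlgebra.of k (FreeMonoid X) a = MonoidAlgebra.single a (1:k) := rfl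

lemma sandwich_eq_mapDomain (a b : FreeMonoid X) (f : MonoidAlgebra k (FreeMonoid X)) :
    MonoidAlgebra.single a (1:k) * f * MonoidAlgebra.single b 1 =
      MonoidAlgebra.mapDomain (fun u => a * u * b) f := by
  induction f using MonoidAlgebra.induction_linear with
  | zero => simp
  | add f g hf hg => rw [mul_add, add_mul, hf, hg, MonoidAlgebra.mapDomain_add]
  | single u c =>
      rw [MonoidAlgebra.single_mul_single, MonoidAlgebra.single_mul_single,
        MonoidAlgebra.mapDomain_single]
      simp

lemma mulwords_injective (a b : FreeMonoid X) :
    Function.Injective (fun u : FreeMonoid X => a * u * b) := by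
  intro u v h
  exact mul_left_cancel (mul_right_cancel h)

lemma sandwich_support (a b : FreeMonoid X) (f : MonoidAlgebra k (FreeMonoid X)) :
    (MonoidAlgebra.single a (1:k) * f * MonoidAlgebra.single b 1).coeff.support =
      f.coeff.support.image (fun u => a * u * b) := by
  classical
  rw [sandwich_eq_mapDomain, MonoidAlgebra.mapDomain, MonoidAlgebra.coeff_ofCoeff,
    Finsupp.mapDomain_support_of_injective (mulwords_injective a b)]

lemma sandwich_apply (a b : FreeMonoid X) (f : MonoidAlgebra k (FreeMonoid X))
    (u : FreeMonoid X) :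
    (MonoidAlgebra.single a (1:k) * f * MonoidAlgebra.single b 1 :
      MonoidAlgebra k (FreeMonoid X)).coeff (a * u * b) = f.coeff u := by
  rw [sandwich_eq_mapDomain, MonoidAlgebra.mapDomain, MonoidAlgebra.coeff_ofCoeff]
  exact Finsupp.mapDomain_apply (mulwords_injective a b) f.coeff u

section Mono
variable (hmono : ∀ u v w₁ w₂ : FreeMonoid X, u < v → w₁ * u * w₂ < w₁ * v * w₂)

include hmono

lemma mono_le {u v : FreeMonoid X} (h : u ≤ v) (a b : FreeMonoid X) : a * u * b ≤ a * v * b := by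
  rcases h.lt_or_eq with h | rfl
  · exact (hmono u v a b h).le
  · exact le_rfl

lemma sandwich_lw {f : MonoidAlgebra k (FreeMonoid X)} (hf : f ≠ 0) (a b : FreeMonoid X) :
    leadWord (MonoidAlgebra.single a (1:k) * f * MonoidAlgebra.single b 1) =
      a * leadWord f * b := by
  apply lw_eq
  · rw [sandwich_apply]; exact lw_coeff_ne hf
  · intro u hu
    rw [sandwich_support] at hu
    rcases Finset.mem_image.1 hu with ⟨v, hv, rfl⟩
    exact mono_le hmono (le_lw hv) a b

end Mono


/-! ### the auxiliary submodules -/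

variable (S : Set (MonoidAlgebra k (FreeMonoid X)))

noncomputable def Tlt (w : FreeMonoid X) : Submodule k (MonoidAlgebra k (FreeMonoid X)) :=
  Submodule.span k
    {x : MonoidAlgebra k (FreeMonoid X) |
      ∃ a b : FreeMonoid X, ∃ s ∈ S,
        x = MonoidAlgebra.of k (FreeMonoid X) a * s * MonoidAlgebra.of k (FreeMonoid X) b ∧
          a * leadWord s * b < w}

noncomputable def Tle (w : FreeMonoid X) : Submodule k (MonoidAlgebra k (FreeMonoid X)) :=
  Submodule.span k
    {x : MonoidAlgebra k (FreeMonoid X) |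
      ∃ a b : FreeMonoid X, ∃ s ∈ S,
        x = MonoidAlgebra.of k (FreeMonoid X) a * s * MonoidAlgebra.of k (FreeMonoid X) b ∧
          a * leadWord s * b ≤ w}

noncomputable def Tall : Submodule k (MonoidAlgebra k (FreeMonoid X)) :=
  Submodule.span k
    {x : MonoidAlgebra k (FreeMonoid X) |
      ∃ a b : FreeMonoid X, ∃ s ∈ S,
        x = MonoidAlgebra.of k (FreeMonoid X) a * s * MonoidAlgebra.of k (FreeMonoid X) b}

noncomputable def IrrSpan : Submodule k (MonoidAlgebra k (FreeMonoid X)) :=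
  Submodule.span k ((fun u => MonoidAlgebra.of k (FreeMonoid X) u) '' IrrSet S)

variable {S}

lemma trivialMod_iff {w : FreeMonoid X} {h : MonoidAlgebra k (FreeMonoid X)} :
    TrivialMod S w h ↔ h ∈ Tlt S w := Iff.rfl

lemma Tlt_le_Tle {w₁ w₂ : FreeMonoid X} (h : w₁ ≤ w₂) : Tlt S w₁ ≤ Tle S w₂ :=
  Submodule.span_mono (fun x ⟨a, b, s, hs, hx, hk⟩ => ⟨a, b, s, hs, hx, hk.le.trans h⟩)

lemma Tle_le_Tlt {w₁ w₂ : FreeMonoid X} (h : w₁ < w₂) : Tle S w₁ ≤ Tlt S w₂ :=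
  Submodule.span_mono (fun x ⟨a, b, s, hs, hx, hk⟩ => ⟨a, b, s, hs, hx, lt_of_le_of_lt hk h⟩)

lemma Tle_mono {w₁ w₂ : FreeMonoid X} (h : w₁ ≤ w₂) : Tle S w₁ ≤ Tle S w₂ :=
  Submodule.span_mono (fun x ⟨a, b, s, hs, hx, hk⟩ => ⟨a, b, s, hs, hx, hk.trans h⟩)

lemma Tlt_le_Tall {w : FreeMonoid X} : Tlt S w ≤ Tall S :=
  Submodule.span_mono (fun x ⟨a, b, s, hs, hx, _⟩ => ⟨a, b, s, hs, hx⟩)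

lemma Tle_le_Tall {w : FreeMonoid X} : Tle S w ≤ Tall S :=
  Submodule.span_mono (fun x ⟨a, b, s, hs, hx, _⟩ => ⟨a, b, s, hs, hx⟩)

lemma Tall_le_ideal : Tall S ≤ idealOfSet S :=
  Submodule.span_mono (fun x ⟨a, b, s, hs, hx⟩ =>
    ⟨MonoidAlgebra.of k (FreeMonoid X) a, MonoidAlgebra.of k (FreeMonoid X) b, s, hs, hx⟩)

lemma ideal_eq_Tall : idealOfSet S = Tall S := by
  refine le_antisymm ?_ (Tall_le_ideal)
  rw [idealOfSet, Submodule.span_le]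
  rintro x ⟨a, b, s, hs, rfl⟩
  have hb : ∀ a : MonoidAlgebra k (FreeMonoid X), a * s * b ∈ Tall S := by
    intro a
    induction a using MonoidAlgebra.induction_linear with
    | zero => simpa using (Tall S).zero_mem
    | add f g hf hg => rw [add_mul, add_mul]; exact (Tall S).add_mem hf hg
    | single u c =>
        induction b using MonoidAlgebra.induction_linear with
        | zero => simpa using (Tall S).zero_mem
        | add f g hf hg => rw [mul_add]; exact (Tall S).add_mem hf hg
        | single v d =>
            have : (MonoidAlgebra.single u c : MonoidAlgebra k (FreeMonoid X)) * s *
                MonoidAlgebra.single v d =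
                (c * d) • (MonoidAlgebra.single u (1:k) * s * MonoidAlgebra.single v 1) := by
              have h1 : (MonoidAlgebra.single u c : MonoidAlgebra k (FreeMonoid X)) =
                  c • MonoidAlgebra.single u (1:k) := by
                rw [MonoidAlgebra.smul_single, smul_eq_mul, mul_one]
              have h2 : (MonoidAlgebra.single v d : MonoidAlgebra k (FreeMonoid X)) =
                  d • MonoidAlgebra.single v (1:k) := by
                rw [MonoidAlgebra.smul_single, smul_eq_mul, mul_one]
              rw [h1, h2, smul_mul_assoc, smul_mul_assoc, mul_smul_comm, smul_smul]
            rw [this]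
            exact (Tall S).smul_mem _ (Submodule.subset_span ⟨u, v, s, hs, rfl⟩)
  exact hb a

/-! ### supported bounds -/

section Mono2
variable (hmono : ∀ u v w₁ w₂ : FreeMonoid X, u < v → w₁ * u * w₂ < w₁ * v * w₂)
include hmono

lemma Tlt_supported {w : FreeMonoid X} {h : MonoidAlgebra k (FreeMonoid X)}
    (hh : h ∈ Tlt S w) : ∀ u ∈ h.coeff.support, u < w := by
  have : Tlt S w ≤ MonoidAlgebra.supported k k {u : FreeMonoid X | u < w} := by
    rw [Tlt, Submodule.span_le]
    rintro x ⟨a, b, s, hs, rfl, hk⟩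
    rw [SetLike.mem_coe, MonoidAlgebra.mem_supported]
    intro u hu
    rw [of_eq_single, of_eq_single] at hu
    rw [Finset.mem_coe, sandwich_support] at hu
    rcases Finset.mem_image.1 hu with ⟨v, hv, rfl⟩
    exact lt_of_le_of_lt (mono_le hmono (le_lw hv) a b) hk
  exact fun u hu => (MonoidAlgebra.mem_supported.1 (this hh)) hu

lemma Tle_supported {w : FreeMonoid X} {h : MonoidAlgebra k (FreeMonoid X)}
    (hh : h ∈ Tle S w) : ∀ u ∈ h.coeff.support, u ≤ w := by
  have : Tle S w ≤ MonoidAlgebra.supported k k {u : FreeMonoid X | u ≤ w} := by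
    rw [Tle, Submodule.span_le]
    rintro x ⟨a, b, s, hs, rfl, hk⟩
    rw [SetLike.mem_coe, MonoidAlgebra.mem_supported]
    intro u hu
    rw [of_eq_single, of_eq_single] at hu
    rw [Finset.mem_coe, sandwich_support] at hu
    rcases Finset.mem_image.1 hu with ⟨v, hv, rfl⟩
    exact le_trans (mono_le hmono (le_lw hv) a b) hk
  exact fun u hu => (MonoidAlgebra.mem_supported.1 (this hh)) hu

end Mono2

lemma IrrSpan_supported {h : MonoidAlgebra k (FreeMonoid X)} (hh : h ∈ IrrSpan S) :
    ∀ u ∈ h.coeff.support, u ∈ IrrSet S := by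
  have : IrrSpan S ≤ MonoidAlgebra.supported k k (IrrSet S) := by
    rw [IrrSpan, Submodule.span_le]
    rintro x ⟨u, hu, rfl⟩
    rw [SetLike.mem_coe, MonoidAlgebra.mem_supported]
    intro v hv
    rcases Finset.mem_singleton.1 (Finsupp.support_single_subset hv) with rfl
    exact hu
  exact fun u hu => (MonoidAlgebra.mem_supported.1 (this hh)) hu


/-! ### conjugation and expansion -/

lemma sandwich_sandwich (a b a' b' : FreeMonoid X) (s : MonoidAlgebra k (FreeMonoid X)) :
    MonoidAlgebra.single a (1:k) * (MonoidAlgebra.single a' 1 * s * MonoidAlgebra.single b' 1) *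
        MonoidAlgebra.single b 1 =
      MonoidAlgebra.single (a * a') 1 * s * MonoidAlgebra.single (b' * b) 1 := by
  have h1 : (MonoidAlgebra.single (a * a') (1:k) : MonoidAlgebra k (FreeMonoid X)) =
      MonoidAlgebra.single a 1 * MonoidAlgebra.single a' 1 := by
    rw [MonoidAlgebra.single_mul_single, one_mul]
  have h2 : (MonoidAlgebra.single (b' * b) (1:k) : MonoidAlgebra k (FreeMonoid X)) =
      MonoidAlgebra.single b' 1 * MonoidAlgebra.single b 1 := by
    rw [MonoidAlgebra.single_mul_single, one_mul]
  rw [h1, h2]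
  simp only [mul_assoc]

section Mono3
variable (hmono : ∀ u v w₁ w₂ : FreeMonoid X, u < v → w₁ * u * w₂ < w₁ * v * w₂)
include hmono

lemma conj_Tlt {S : Set (MonoidAlgebra k (FreeMonoid X))} {w : FreeMonoid X}
    {h : MonoidAlgebra k (FreeMonoid X)} (hh : h ∈ Tlt S w) (a b : FreeMonoid X) :
    MonoidAlgebra.single a (1:k) * h * MonoidAlgebra.single b 1 ∈ Tlt S (a * w * b) := by
  have hmap : Tlt S w ≤ Submodule.comap
      ((LinearMap.mulRight k (MonoidAlgebra.single b (1:k))).comp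
        (LinearMap.mulLeft k (MonoidAlgebra.single a (1:k)))) (Tlt S (a * w * b)) := by
    rw [Tlt, Submodule.span_le]
    rintro x ⟨a', b', s, hs, rfl, hk⟩
    simp only [SetLike.mem_coe, Submodule.mem_comap, LinearMap.comp_apply,
      LinearMap.mulLeft_apply, LinearMap.mulRight_apply]
    rw [of_eq_single, of_eq_single, sandwich_sandwich]
    refine Submodule.subset_span ⟨a * a', b' * b, s, hs, rfl, ?_⟩
    have := hmono _ _ a b hk
    calc a * a' * leadWord s * (b' * b) = a * (a' * leadWord s * b') * b := by
          simp only [mul_assoc]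
      _ < a * w * b := this
  exact hmap hh

lemma expand_left {S : Set (MonoidAlgebra k (FreeMonoid X))} {u : FreeMonoid X}
    {t : MonoidAlgebra k (FreeMonoid X)} (ht : ∀ v ∈ t.coeff.support, v < u)
    (a c b : FreeMonoid X) {s : MonoidAlgebra k (FreeMonoid X)} (hs : s ∈ S) :
    MonoidAlgebra.single a (1:k) * t *
        (MonoidAlgebra.single c 1 * s * MonoidAlgebra.single b 1) ∈
      Tlt S (a * u * (c * leadWord s * b)) := by
  have htm : t ∈ MonoidAlgebra.supported k k {v : FreeMonoid X | v < u} :=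
    MonoidAlgebra.mem_supported.2 (fun v hv => ht v hv)
  rw [MonoidAlgebra.supported_eq_span_single] at htm
  refine Submodule.span_induction
    (p := fun x _ => MonoidAlgebra.single a (1:k) * x *
      (MonoidAlgebra.single c 1 * s * MonoidAlgebra.single b 1) ∈
        Tlt S (a * u * (c * leadWord s * b))) ?_ ?_ ?_ ?_ htm
  · rintro x ⟨v, hv, rfl⟩
    have heq : MonoidAlgebra.single a (1:k) * MonoidAlgebra.single v 1 *
        (MonoidAlgebra.single c 1 * s * MonoidAlgebra.single b 1) =
        MonoidAlgebra.single (a * v * c) 1 * s * MonoidAlgebra.single b 1 := by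
      have e1 : MonoidAlgebra.single a (1:k) * MonoidAlgebra.single v 1 =
          MonoidAlgebra.single (a * v) (1:k) := by
        rw [MonoidAlgebra.single_mul_single, one_mul]
      have e2 : (MonoidAlgebra.single (a * v) (1:k)) * MonoidAlgebra.single c 1 =
          MonoidAlgebra.single (a * v * c) (1:k) := by
        rw [MonoidAlgebra.single_mul_single, one_mul]
      rw [e1, ← e2]
      simp only [mul_assoc]
    rw [heq]
    refine Submodule.subset_span ⟨a * v * c, b, s, hs, rfl, ?_⟩
    have h' := hmono v u a (c * leadWord s * b) hv
    calc a * v * c * leadWord s * b = a * v * (c * leadWord s * b) := by simp only [mul_assoc]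
      _ < a * u * (c * leadWord s * b) := h'
  · simp
  · intro x y _ _ hx hy
    rw [mul_add, add_mul]
    exact (Tlt S _).add_mem hx hy
  · intro r x _ hx
    rw [mul_smul_comm, smul_mul_assoc]
    exact (Tlt S _).smul_mem r hx

lemma expand_right {S : Set (MonoidAlgebra k (FreeMonoid X))} {u : FreeMonoid X}
    {t : MonoidAlgebra k (FreeMonoid X)} (ht : ∀ v ∈ t.coeff.support, v < u)
    (a c b : FreeMonoid X) {s : MonoidAlgebra k (FreeMonoid X)} (hs : s ∈ S) :
    (MonoidAlgebra.single a (1:k) * s * MonoidAlgebra.single c 1) * t *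
        MonoidAlgebra.single b 1 ∈
      Tlt S (a * leadWord s * (c * u * b)) := by
  have htm : t ∈ MonoidAlgebra.supported k k {v : FreeMonoid X | v < u} :=
    MonoidAlgebra.mem_supported.2 (fun v hv => ht v hv)
  rw [MonoidAlgebra.supported_eq_span_single] at htm
  refine Submodule.span_induction
    (p := fun x _ => (MonoidAlgebra.single a (1:k) * s * MonoidAlgebra.single c 1) * x *
      MonoidAlgebra.single b 1 ∈ Tlt S (a * leadWord s * (c * u * b))) ?_ ?_ ?_ ?_ htm
  · rintro x ⟨v, hv, rfl⟩
    have heq : (MonoidAlgebra.single a (1:k) * s * MonoidAlgebra.single c 1) *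
        MonoidAlgebra.single v 1 * MonoidAlgebra.single b 1 =
        MonoidAlgebra.single a 1 * s * MonoidAlgebra.single (c * v * b) 1 := by
      have e1 : (MonoidAlgebra.single (c * v * b) (1:k) : MonoidAlgebra k (FreeMonoid X)) =
          MonoidAlgebra.single c 1 * MonoidAlgebra.single v 1 * MonoidAlgebra.single b 1 := by
        rw [MonoidAlgebra.single_mul_single, MonoidAlgebra.single_mul_single, one_mul, one_mul]
      rw [e1]
      simp only [mul_assoc]
    rw [heq]
    refine Submodule.subset_span ⟨a, c * v * b, s, hs, rfl, ?_⟩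
    have h' := hmono v u (a * leadWord s * c) b hv
    calc a * leadWord s * (c * v * b) = a * leadWord s * c * v * b := by simp only [mul_assoc]
      _ < a * leadWord s * c * u * b := h'
      _ = a * leadWord s * (c * u * b) := by simp only [mul_assoc]
  · simp
  · intro x y _ _ hx hy
    rw [mul_add, add_mul]
    exact (Tlt S _).add_mem hx hy
  · intro r x _ hx
    rw [mul_smul_comm, smul_mul_assoc]
    exact (Tlt S _).smul_mem r hx

end Mono3

lemma sub_lead_supp {s : MonoidAlgebra k (FreeMonoid X)} (hs : IsMonic s) :
    ∀ v ∈ (s - MonoidAlgebra.single (leadWord s) 1).coeff.support, v < leadWord s := by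
  intro v hv
  rw [Finsupp.mem_support_iff] at hv
  by_cases hveq : v = leadWord s
  · subst hveq
    rw [MonoidAlgebra.coeff_sub, Finsupp.sub_apply, MonoidAlgebra.coeff_single, Finsupp.single_eq_same, hs, sub_self] at hv
    exact absurd rfl hv
  · have hsv : s.coeff v ≠ 0 := by
      rwa [MonoidAlgebra.coeff_sub, Finsupp.sub_apply, MonoidAlgebra.coeff_single,
        Finsupp.single_eq_of_ne' (Ne.symm hveq), sub_zero] at hv
    exact lt_of_le_of_ne (le_lw (Finsupp.mem_support_iff.2 hsv)) hveq

/-! ### word combinatorics -/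

lemma fm_pref {x y p q : FreeMonoid X} (h : x * p = y * q) (hl : x.length ≤ y.length) :
    ∃ t : FreeMonoid X, y = x * t ∧ p = t * q := by
  have hl' : (FreeMonoid.toList x).length ≤ (FreeMonoid.toList y).length := hl
  have h1 : FreeMonoid.toList x <+: FreeMonoid.toList (y * q) := by
    rw [← h, FreeMonoid.toList_mul]
    exact List.prefix_append _ _
  have h2 : FreeMonoid.toList y <+: FreeMonoid.toList (y * q) := by
    rw [FreeMonoid.toList_mul]
    exact List.prefix_append _ _
  rcases List.prefix_of_prefix_length_le h1 h2 hl' with ⟨t', ht'⟩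
  refine ⟨FreeMonoid.ofList t', ?_, ?_⟩
  · apply FreeMonoid.toList.injective
    rw [FreeMonoid.toList_mul, FreeMonoid.toList_ofList, ht']
  · have hy : y = x * FreeMonoid.ofList t' := by
      apply FreeMonoid.toList.injective
      rw [FreeMonoid.toList_mul, FreeMonoid.toList_ofList, ht']
    rw [hy, mul_assoc] at h
    exact mul_left_cancel h


/-! ### the overlap lemma -/

section Overlap
variable {S : Set (MonoidAlgebra k (FreeMonoid X))}
variable (hmono : ∀ u v w₁ w₂ : FreeMonoid X, u < v → w₁ * u * w₂ < w₁ * v * w₂)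
include hmono

lemma overlap_aux (hgsb : IsGroebnerShirshovBasis S) (hS : ∀ s ∈ S, IsMonic s)
    {s₁ s₂ : MonoidAlgebra k (FreeMonoid X)} (h₁ : s₁ ∈ S) (h₂ : s₂ ∈ S)
    {a₁ b₁ a₂ b₂ : FreeMonoid X}
    (hk : a₁ * leadWord s₁ * b₁ = a₂ * leadWord s₂ * b₂)
    (hlen : a₁.length ≤ a₂.length) :
    MonoidAlgebra.single a₁ (1:k) * s₁ * MonoidAlgebra.single b₁ 1 -
      MonoidAlgebra.single a₂ 1 * s₂ * MonoidAlgebra.single b₂ 1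
      ∈ Tlt S (a₁ * leadWord s₁ * b₁) := by
  obtain ⟨t, rfl, h2⟩ := fm_pref (x := a₁) (y := a₂) (p := leadWord s₁ * b₁)
    (q := leadWord s₂ * b₂) (by simp only [← mul_assoc]; exact hk) hlen
  rcases le_or_gt (leadWord s₁).length t.length with hA | hBC
  · -- disjoint case
    obtain ⟨c, rfl, rfl⟩ := fm_pref (x := leadWord s₁) (y := t) (p := b₁)
      (q := leadWord s₂ * b₂) h2 hA
    have eC : (MonoidAlgebra.single (c * (leadWord s₂ * b₂)) (1:k) :
        MonoidAlgebra k (FreeMonoid X)) =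
        MonoidAlgebra.single c 1 * (MonoidAlgebra.single (leadWord s₂) 1 *
          MonoidAlgebra.single b₂ 1) := by
      simp [MonoidAlgebra.single_mul_single]
    have eA : (MonoidAlgebra.single (a₁ * (leadWord s₁ * c)) (1:k) :
        MonoidAlgebra k (FreeMonoid X)) =
        MonoidAlgebra.single a₁ 1 * (MonoidAlgebra.single (leadWord s₁) 1 *
          MonoidAlgebra.single c 1) := by
      simp [MonoidAlgebra.single_mul_single]
    have hid : MonoidAlgebra.single a₁ (1:k) * s₁ *
          MonoidAlgebra.single (c * (leadWord s₂ * b₂)) 1 -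
          MonoidAlgebra.single (a₁ * (leadWord s₁ * c)) 1 * s₂ * MonoidAlgebra.single b₂ 1 =
        (MonoidAlgebra.single a₁ (1:k) * (s₁ - MonoidAlgebra.single (leadWord s₁) 1) *
          (MonoidAlgebra.single c 1 * s₂ * MonoidAlgebra.single b₂ 1)) -
        ((MonoidAlgebra.single a₁ (1:k) * s₁ * MonoidAlgebra.single c 1) *
          (s₂ - MonoidAlgebra.single (leadWord s₂) 1) * MonoidAlgebra.single b₂ 1) := by
      rw [eC, eA]
      noncomm_ring
    rw [hid]
    refine Submodule.sub_mem _ ?_ ?_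
    · have memA := expand_left hmono (sub_lead_supp (hS s₁ h₁)) a₁ c b₂ h₂
      convert memA using 2
      simp only [mul_assoc]
    · have memB := expand_right hmono (sub_lead_supp (hS s₂ h₂)) a₁ c b₂ h₁
      convert memB using 2
      simp only [mul_assoc]
  · -- t is a proper prefix of leadWord s₁
    obtain ⟨r, hu₁, h3⟩ := fm_pref (x := t) (y := leadWord s₁) (p := leadWord s₂ * b₂)
      (q := b₁) h2.symm hBC.le
    have hrlen : 1 ≤ r.length := by
      by_contra hr
      push_neg at hr
      have : (leadWord s₁).length = t.length + r.length := by
        rw [hu₁, FreeMonoid.length_mul]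
      omega
    rcases le_or_gt (leadWord s₂).length r.length with hB | hC
    · -- inclusion case
      obtain ⟨d, hr, rfl⟩ := fm_pref (x := leadWord s₂) (y := r) (p := b₂) (q := b₁)
        h3 hB
      have hincl : leadWord s₁ = t * leadWord s₂ * d := by
        rw [hu₁, hr]; simp only [mul_assoc]
      have hcomp := hgsb.2 s₁ h₁ s₂ h₂ t d hincl
      rw [trivialMod_iff] at hcomp
      have hconj := conj_Tlt hmono hcomp a₁ b₁
      have hid : MonoidAlgebra.single a₁ (1:k) * s₁ * MonoidAlgebra.single b₁ 1 -
          MonoidAlgebra.single (a₁ * t) 1 * s₂ * MonoidAlgebra.single (d * b₁) 1 =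
          MonoidAlgebra.single a₁ (1:k) *
            (s₁ - MonoidAlgebra.of k (FreeMonoid X) t * s₂ * MonoidAlgebra.of k (FreeMonoid X) d) *
            MonoidAlgebra.single b₁ 1 := by
        rw [of_eq_single, of_eq_single,
          show (MonoidAlgebra.single (a₁ * t) (1:k) : MonoidAlgebra k (FreeMonoid X)) =
            MonoidAlgebra.single a₁ 1 * MonoidAlgebra.single t 1 by
              simp [MonoidAlgebra.single_mul_single],
          show (MonoidAlgebra.single (d * b₁) (1:k) : MonoidAlgebra k (FreeMonoid X)) =
            MonoidAlgebra.single d 1 * MonoidAlgebra.single b₁ 1 by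
              simp [MonoidAlgebra.single_mul_single]]
        noncomm_ring
      rw [hid]
      exact hconj
    · -- overlap case
      obtain ⟨q', hu₂, rfl⟩ := fm_pref (x := r) (y := leadWord s₂) (p := b₁) (q := b₂)
        h3.symm hC.le
      have hw0 : leadWord s₁ * q' = t * leadWord s₂ := by
        rw [hu₁, hu₂]; simp only [mul_assoc]
      have hlen0 : (leadWord s₁ * q').length <
          (leadWord s₁).length + (leadWord s₂).length := by
        rw [FreeMonoid.length_mul]
        have : (leadWord s₂).length = r.length + q'.length := by
          rw [hu₂, FreeMonoid.length_mul]
        omega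
      have hcomp := hgsb.1 s₁ h₁ s₂ h₂ t q' (leadWord s₁ * q') rfl hw0 hlen0
      rw [trivialMod_iff] at hcomp
      have hconj := conj_Tlt hmono hcomp a₁ b₂
      have hid : MonoidAlgebra.single a₁ (1:k) * s₁ * MonoidAlgebra.single (q' * b₂) 1 -
          MonoidAlgebra.single (a₁ * t) 1 * s₂ * MonoidAlgebra.single b₂ 1 =
          MonoidAlgebra.single a₁ (1:k) *
            (s₁ * MonoidAlgebra.of k (FreeMonoid X) q' - MonoidAlgebra.of k (FreeMonoid X) t * s₂) *
            MonoidAlgebra.single b₂ 1 := by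
        rw [of_eq_single, of_eq_single,
          show (MonoidAlgebra.single (a₁ * t) (1:k) : MonoidAlgebra k (FreeMonoid X)) =
            MonoidAlgebra.single a₁ 1 * MonoidAlgebra.single t 1 by
              simp [MonoidAlgebra.single_mul_single],
          show (MonoidAlgebra.single (q' * b₂) (1:k) : MonoidAlgebra k (FreeMonoid X)) =
            MonoidAlgebra.single q' 1 * MonoidAlgebra.single b₂ 1 by
              simp [MonoidAlgebra.single_mul_single]]
        noncomm_ring
      rw [hid]
      convert hconj using 2
      simp only [mul_assoc]

lemma overlap (hgsb : IsGroebnerShirshovBasis S) (hS : ∀ s ∈ S, IsMonic s)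
    {s₁ s₂ : MonoidAlgebra k (FreeMonoid X)} (h₁ : s₁ ∈ S) (h₂ : s₂ ∈ S)
    {a₁ b₁ a₂ b₂ : FreeMonoid X}
    (hk : a₁ * leadWord s₁ * b₁ = a₂ * leadWord s₂ * b₂) :
    MonoidAlgebra.single a₁ (1:k) * s₁ * MonoidAlgebra.single b₁ 1 -
      MonoidAlgebra.single a₂ 1 * s₂ * MonoidAlgebra.single b₂ 1
      ∈ Tlt S (a₁ * leadWord s₁ * b₁) := by
  rcases le_total a₁.length a₂.length with hle | hle
  · exact overlap_aux hmono hgsb hS h₁ h₂ hk hle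
  · have := overlap_aux hmono hgsb hS h₂ h₁ hk.symm hle
    rw [← hk] at this
    have := Submodule.neg_mem _ this
    rwa [neg_sub] at this

end Overlap


/-! ### list expressions -/





end CDLAux

structure Ent (k X : Type*) [Semiring k] where
  c : k
  a : FreeMonoid X
  s : MonoidAlgebra k (FreeMonoid X)
  b : FreeMonoid X

namespace CDLAux

open scoped Classical

noncomputable def eval (e : Ent k X) : MonoidAlgebra k (FreeMonoid X) :=
  e.c • (MonoidAlgebra.single e.a 1 * e.s * MonoidAlgebra.single e.b 1)

noncomputable def ekey (e : Ent k X) : FreeMonoid X := e.a * leadWord e.s * e.b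

noncomputable def lval (L : List (Ent k X)) : MonoidAlgebra k (FreeMonoid X) :=
  (L.map eval).sum

@[simp] lemma lval_nil : lval ([] : List (Ent k X)) = 0 := rfl

@[simp] lemma lval_cons (e : Ent k X) (L : List (Ent k X)) :
    lval (e :: L) = eval e + lval L := by simp [lval]

lemma lval_append (L₁ L₂ : List (Ent k X)) : lval (L₁ ++ L₂) = lval L₁ + lval L₂ := by
  simp [lval]

lemma lval_scale (r : k) (L : List (Ent k X)) :
    lval (L.map (fun e => ⟨r * e.c, e.a, e.s, e.b⟩)) = r • lval L := by
  induction L with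
  | nil => simp
  | cons e L ih =>
      simp only [List.map_cons, lval_cons, ih, smul_add]
      congr 1
      simp [eval, smul_smul]

lemma span_to_list {S : Set (MonoidAlgebra k (FreeMonoid X))}
    {R : FreeMonoid X → MonoidAlgebra k (FreeMonoid X) → FreeMonoid X → Prop}
    {x : MonoidAlgebra k (FreeMonoid X)}
    (hx : x ∈ Submodule.span k
      {x : MonoidAlgebra k (FreeMonoid X) |
        ∃ a b : FreeMonoid X, ∃ s ∈ S,
          x = MonoidAlgebra.of k (FreeMonoid X) a * s * MonoidAlgebra.of k (FreeMonoid X) b ∧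
            R a s b}) :
    ∃ L : List (Ent k X), (∀ e ∈ L, e.s ∈ S ∧ R e.a e.s e.b) ∧ lval L = x := by
  refine Submodule.span_induction ?_ ?_ ?_ ?_ hx
  · rintro x ⟨a, b, s, hs, rfl, hR⟩
    refine ⟨[⟨1, a, s, b⟩], ?_, by simp [lval, eval, of_eq_single]⟩
    intro e he
    rw [List.mem_singleton] at he
    subst he
    exact ⟨hs, hR⟩
  · exact ⟨[], by simp, rfl⟩
  · rintro x y _ _ ⟨L₁, hL₁, rfl⟩ ⟨L₂, hL₂, rfl⟩
    exact ⟨L₁ ++ L₂, fun e he => by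
      rcases List.mem_append.1 he with h | h
      exacts [hL₁ e h, hL₂ e h], (lval_append L₁ L₂).symm ▸ rfl⟩
  · rintro r x _ ⟨L, hL, rfl⟩
    exact ⟨L.map (fun e => ⟨r * e.c, e.a, e.s, e.b⟩), fun e he => by
      rcases List.mem_map.1 he with ⟨f, hf, rfl⟩
      exact hL f hf, lval_scale r L⟩

noncomputable def cnt (m : FreeMonoid X) : List (Ent k X) → ℕ
  | [] => 0
  | e :: L => (if e.c ≠ 0 ∧ ekey e = m then 1 else 0) + cnt m L

@[simp] lemma cnt_nil (m : FreeMonoid X) : cnt m ([] : List (Ent k X)) = 0 := rfl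

lemma cnt_cons (m : FreeMonoid X) (e : Ent k X) (L : List (Ent k X)) :
    cnt m (e :: L) = (if e.c ≠ 0 ∧ ekey e = m then 1 else 0) + cnt m L := rfl

lemma cnt_append (m : FreeMonoid X) (L₁ L₂ : List (Ent k X)) :
    cnt m (L₁ ++ L₂) = cnt m L₁ + cnt m L₂ := by
  induction L₁ with
  | nil => simp
  | cons e L ih => simp only [List.cons_append, cnt_cons, ih]; omega

lemma cnt_eq_zero {m : FreeMonoid X} {L : List (Ent k X)} :
    cnt m L = 0 ↔ ∀ e ∈ L, e.c = 0 ∨ ekey e ≠ m := by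
  induction L with
  | nil => simp
  | cons e L ih =>
      rw [cnt_cons]
      by_cases he : e.c ≠ 0 ∧ ekey e = m
      · simp only [if_pos he]
        constructor
        · omega
        · intro h
          rcases h e (by simp) with h' | h'
          · exact absurd h' he.1
          · exact absurd he.2 h'
      · simp only [if_neg he, zero_add, ih]
        constructor
        · intro h f hf
          rcases List.mem_cons.1 hf with rfl | hf
          · by_cases hc : f.c = 0
            · exact Or.inl hc
            · exact Or.inr (fun hk => he ⟨hc, hk⟩)
          · exact h f hf
        · intro h f hf
          exact h f (List.mem_cons_of_mem _ hf)

lemma cnt_pos_split {m : FreeMonoid X} {L : List (Ent k X)} (h : cnt m L ≠ 0) :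
    ∃ L₁ e₀ L₂, L = L₁ ++ e₀ :: L₂ ∧ e₀.c ≠ 0 ∧ ekey e₀ = m ∧
      cnt m (L₁ ++ L₂) + 1 = cnt m L := by
  induction L with
  | nil => simp at h
  | cons e L ih =>
      by_cases he : e.c ≠ 0 ∧ ekey e = m
      · exact ⟨[], e, L, rfl, he.1, he.2, by simp only [List.nil_append, cnt_cons, if_pos he]; omega⟩
      · rw [cnt_cons, if_neg he, zero_add] at h
        obtain ⟨L₁, e₀, L₂, rfl, hc, hk, hcnt⟩ := ih h
        refine ⟨e :: L₁, e₀, L₂, rfl, hc, hk, ?_⟩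
        rw [List.cons_append, cnt_cons, if_neg he, cnt_cons, if_neg he]
        omega

noncomputable def strip : List (Ent k X) → List (Ent k X)
  | [] => []
  | e :: L => if e.c = 0 then strip L else e :: strip L

lemma lval_strip (L : List (Ent k X)) : lval (strip L) = lval L := by
  induction L with
  | nil => rfl
  | cons e L ih =>
      by_cases he : e.c = 0
      · rw [strip, if_pos he, lval_cons, ih]
        have : eval e = 0 := by simp [eval, he]
        rw [this, zero_add]
      · rw [strip, if_neg he, lval_cons, lval_cons, ih]

lemma mem_strip {L : List (Ent k X)} {e : Ent k X} (he : e ∈ strip L) :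
    e ∈ L ∧ e.c ≠ 0 := by
  induction L with
  | nil => simp [strip] at he
  | cons f L ih =>
      by_cases hf : f.c = 0
      · rw [strip, if_pos hf] at he
        exact ⟨List.mem_cons_of_mem _ (ih he).1, (ih he).2⟩
      · rw [strip, if_neg hf] at he
        rcases List.mem_cons.1 he with rfl | he
        · exact ⟨List.mem_cons_self, hf⟩
        · exact ⟨List.mem_cons_of_mem _ (ih he).1, (ih he).2⟩

lemma exists_max (L : List (Ent k X)) (h : L ≠ []) :
    ∃ e₀ ∈ L, ∀ e ∈ L, ekey e ≤ ekey e₀ := by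
  induction L with
  | nil => exact absurd rfl h
  | cons e L ih =>
      rcases L.eq_nil_or_concat' with rfl | hL
      · exact ⟨e, by simp, by simp⟩
      · have hne : L ≠ [] := by rcases hL with ⟨_, _, rfl⟩; simp
        obtain ⟨e₀, he₀, hmax⟩ := ih hne
        rcases le_total (ekey e) (ekey e₀) with hle | hle
        · exact ⟨e₀, List.mem_cons_of_mem _ he₀, fun f hf => by
            rcases List.mem_cons.1 hf with rfl | hf
            · exact hle
            · exact hmax f hf⟩
        · exact ⟨e, List.mem_cons_self, fun f hf => by
            rcases List.mem_cons.1 hf with rfl | hf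
            · exact le_rfl
            · exact (hmax f hf).trans hle⟩

section EvalLemmas
variable (hmono : ∀ u v w₁ w₂ : FreeMonoid X, u < v → w₁ * u * w₂ < w₁ * v * w₂)
include hmono

lemma eval_supp_le {e : Ent k X} {m : FreeMonoid X} (he : ekey e ≤ m) :
    ∀ u ∈ (eval e).coeff.support, u ≤ m := by
  intro u hu
  rw [eval, MonoidAlgebra.coeff_smul] at hu
  have hu' : u ∈ (MonoidAlgebra.single e.a (1:k) * e.s * MonoidAlgebra.single e.b 1).coeff.support :=
    Finsupp.support_smul hu
  rw [sandwich_support] at hu'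
  rcases Finset.mem_image.1 hu' with ⟨v, hv, rfl⟩
  exact le_trans (mono_le hmono (le_lw hv) e.a e.b) he

lemma lval_supp_le {L : List (Ent k X)} {m : FreeMonoid X}
    (hL : ∀ e ∈ L, ekey e ≤ m) : ∀ u ∈ (lval L).coeff.support, u ≤ m := by
  induction L with
  | nil => simp
  | cons e L ih =>
      intro u hu
      rw [lval_cons, MonoidAlgebra.coeff_add] at hu
      rcases Finset.mem_union.1 (Finsupp.support_add hu) with h | h
      · exact eval_supp_le hmono (hL e (by simp)) u h
      · exact ih (fun f hf => hL f (List.mem_cons_of_mem _ hf)) u h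

lemma eval_apply_of_lt {e : Ent k X} {m : FreeMonoid X} (he : ekey e < m) :
    (eval e).coeff m = 0 := by
  by_contra h
  have : m ∈ (eval e).coeff.support := Finsupp.mem_support_iff.2 h
  exact absurd (eval_supp_le hmono le_rfl m this) (not_le.2 he)

lemma lval_apply_zero {L : List (Ent k X)} {m : FreeMonoid X}
    (hL : ∀ e ∈ L, e.c = 0 ∨ ekey e < m) : (lval L).coeff m = 0 := by
  induction L with
  | nil => simp
  | cons e L ih =>
      rw [lval_cons, MonoidAlgebra.coeff_add, Finsupp.add_apply, ih (fun f hf => hL f (List.mem_cons_of_mem _ hf)),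
        add_zero]
      rcases hL e (by simp) with h | h
      · simp [eval, h]
      · exact eval_apply_of_lt hmono h

end EvalLemmas

lemma eval_apply_key {e : Ent k X} (hs : IsMonic e.s) : (eval e).coeff (ekey e) = e.c := by
  rw [eval, ekey, MonoidAlgebra.coeff_smul, Finsupp.smul_apply, sandwich_apply, hs, smul_eq_mul, mul_one]


/-! ### the key lemma: leading words of ideal elements contain leading words of S -/

section Crux
variable {S : Set (MonoidAlgebra k (FreeMonoid X))} [WellFoundedLT (FreeMonoid X)]
variable (hmono : ∀ u v w₁ w₂ : FreeMonoid X, u < v → w₁ * u * w₂ < w₁ * v * w₂)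
variable (hgsb : IsGroebnerShirshovBasis S) (hS : ∀ s ∈ S, IsMonic s)
include hmono hgsb hS

lemma crux : ∀ (m : FreeMonoid X) (L : List (Ent k X)),
    (∀ e ∈ L, e.s ∈ S ∧ ekey e ≤ m) → lval L ≠ 0 →
    ∃ s ∈ S, ∃ a b : FreeMonoid X, leadWord (lval L) = a * leadWord s * b := by
  intro m
  induction m using WellFoundedLT.induction with
  | ind m IH =>
  have base : ∀ L : List (Ent k X), (∀ e ∈ L, e.s ∈ S ∧ ekey e ≤ m) → cnt m L = 0 →
      lval L ≠ 0 →
      ∃ s ∈ S, ∃ a b : FreeMonoid X, leadWord (lval L) = a * leadWord s * b := by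
    intro L hL h0 hv
    have hv' : lval (strip L) ≠ 0 := by rwa [lval_strip]
    have hne : strip L ≠ [] := fun h => hv' (by rw [h]; simp)
    obtain ⟨e₀, he₀, hmax⟩ := exists_max (strip L) hne
    have hm' : ekey e₀ < m := by
      obtain ⟨heL, hc⟩ := mem_strip he₀
      rcases (cnt_eq_zero.1 h0) e₀ heL with h | h
      · exact absurd h hc
      · exact lt_of_le_of_ne (hL e₀ heL).2 h
    have hres := IH (ekey e₀) hm' (strip L)
      (fun e he => ⟨(hL e (mem_strip he).1).1, hmax e he⟩) hv'
    rwa [lval_strip] at hres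
  suffices h : ∀ (n : ℕ) (L : List (Ent k X)), cnt m L ≤ n →
      (∀ e ∈ L, e.s ∈ S ∧ ekey e ≤ m) → lval L ≠ 0 →
      ∃ s ∈ S, ∃ a b : FreeMonoid X, leadWord (lval L) = a * leadWord s * b by
    exact fun L hL hv => h (cnt m L) L le_rfl hL hv
  intro n
  induction n with
  | zero => exact fun L hcnt hL hv => base L hL (Nat.le_zero.1 hcnt) hv
  | succ n ihn =>
    intro L hcntL hL hv
    by_cases h0 : cnt m L = 0
    · exact base L hL h0 hv
    obtain ⟨L₁, e₀, L₂, rfl, hc₀, hk₀, hcnt₀⟩ := cnt_pos_split h0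
    have hmem₀ : e₀ ∈ L₁ ++ e₀ :: L₂ := by simp
    by_cases h1 : cnt m (L₁ ++ L₂) = 0
    · -- exactly one maximal term
      refine ⟨e₀.s, (hL e₀ hmem₀).1, e₀.a, e₀.b, ?_⟩
      have hall : ∀ e ∈ L₁ ++ L₂, e.c = 0 ∨ ekey e < m := by
        intro e he
        rcases cnt_eq_zero.1 h1 e he with h | h
        · exact Or.inl h
        · refine Or.inr (lt_of_le_of_ne ?_ h)
          rcases List.mem_append.1 he with h' | h'
          · exact (hL e (List.mem_append_left _ h')).2
          · exact (hL e (List.mem_append_right _ (List.mem_cons_of_mem _ h'))).2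
      have happ : (lval (L₁ ++ e₀ :: L₂)).coeff m = e₀.c := by
        rw [lval_append, lval_cons, MonoidAlgebra.coeff_add, MonoidAlgebra.coeff_add,
          Finsupp.add_apply, Finsupp.add_apply]
        have z1 : (lval L₁).coeff m = 0 :=
          lval_apply_zero hmono (fun e he => hall e (List.mem_append_left _ he))
        have z2 : (lval L₂).coeff m = 0 :=
          lval_apply_zero hmono (fun e he => hall e (List.mem_append_right _ he))
        rw [z1, z2, zero_add, add_zero, ← hk₀,
          eval_apply_key (hS e₀.s (hL e₀ hmem₀).1)]
      have hlw : leadWord (lval (L₁ ++ e₀ :: L₂)) = m := by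
        apply lw_eq (by rw [happ]; exact hc₀)
        exact lval_supp_le hmono (fun e he => (hL e he).2)
      rw [hlw]
      exact hk₀.symm
    · -- at least two maximal terms: rewrite using the overlap lemma
      obtain ⟨M₁, e₁, M₂, hsplit, hc₁, hk₁, hcnt₁⟩ := cnt_pos_split h1
      have hmem₁ : e₁ ∈ L₁ ++ L₂ := by rw [hsplit]; simp
      have hs₀ : e₀.s ∈ S := (hL e₀ hmem₀).1
      have hs₁ : e₁.s ∈ S := by
        rcases List.mem_append.1 hmem₁ with h' | h'
        · exact (hL e₁ (List.mem_append_left _ h')).1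
        · exact (hL e₁ (List.mem_append_right _ (List.mem_cons_of_mem _ h'))).1
      have hkk : e₀.a * leadWord e₀.s * e₀.b = e₁.a * leadWord e₁.s * e₁.b := by
        have : ekey e₀ = ekey e₁ := by rw [hk₀, hk₁]
        exact this
      have hover := overlap hmono hgsb hS hs₀ hs₁ hkk
      rw [show e₀.a * leadWord e₀.s * e₀.b = m from hk₀] at hover
      have hsm := (Tlt S m).smul_mem e₀.c hover
      obtain ⟨D, hD, hDval⟩ :=
        span_to_list (S := S) (R := fun a s b => a * leadWord s * b < m) hsm
      have hcD : cnt m D = 0 :=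
        cnt_eq_zero.2 (fun e he => Or.inr (ne_of_lt (hD e he).2))
      -- the rewritten list
      refine ?_
      set p₀ := MonoidAlgebra.single e₀.a (1:k) * e₀.s * MonoidAlgebra.single e₀.b 1 with hp₀
      set p₁ := MonoidAlgebra.single e₁.a (1:k) * e₁.s * MonoidAlgebra.single e₁.b 1 with hp₁
      have hval'' : lval (M₁ ++ (⟨e₁.c + e₀.c, e₁.a, e₁.s, e₁.b⟩ : Ent k X) :: (M₂ ++ D)) =
          lval (L₁ ++ e₀ :: L₂) := by
        rw [lval_append, lval_cons, lval_append, hDval]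
        have hev : eval (⟨e₁.c + e₀.c, e₁.a, e₁.s, e₁.b⟩ : Ent k X) =
            eval e₁ + e₀.c • p₁ := by
          simp only [eval, hp₁, add_smul]
        have hLL : lval (L₁ ++ L₂) = lval M₁ + (eval e₁ + lval M₂) := by
          rw [hsplit, lval_append, lval_cons]
        have he₀v : eval e₀ = e₀.c • p₀ := rfl
        have hR : lval (L₁ ++ e₀ :: L₂) = lval (L₁ ++ L₂) + eval e₀ := by
          rw [lval_append, lval_append, lval_cons]; abel
        rw [hev, hR, hLL, he₀v, smul_sub]
        abel
      have hbounds : ∀ e ∈ M₁ ++ (⟨e₁.c + e₀.c, e₁.a, e₁.s, e₁.b⟩ : Ent k X) :: (M₂ ++ D),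
          e.s ∈ S ∧ ekey e ≤ m := by
        intro e he
        rcases List.mem_append.1 he with h' | h'
        · have : e ∈ L₁ ++ L₂ := by rw [hsplit]; exact List.mem_append_left _ h'
          rcases List.mem_append.1 this with h'' | h''
          · exact hL e (List.mem_append_left _ h'')
          · exact hL e (List.mem_append_right _ (List.mem_cons_of_mem _ h''))
        · rcases List.mem_cons.1 h' with rfl | h''
          · exact ⟨hs₁, le_of_eq hk₁⟩
          · rcases List.mem_append.1 h'' with h3 | h3
            · have : e ∈ L₁ ++ L₂ := by
                rw [hsplit]
                exact List.mem_append_right _ (List.mem_cons_of_mem _ h3)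
              rcases List.mem_append.1 this with h4 | h4
              · exact hL e (List.mem_append_left _ h4)
              · exact hL e (List.mem_append_right _ (List.mem_cons_of_mem _ h4))
            · exact ⟨(hD e h3).1, (hD e h3).2.le⟩
      have hcnt'' : cnt m (M₁ ++ (⟨e₁.c + e₀.c, e₁.a, e₁.s, e₁.b⟩ : Ent k X) :: (M₂ ++ D)) ≤ n := by
        have c1 := cnt_append m M₁ ((⟨e₁.c + e₀.c, e₁.a, e₁.s, e₁.b⟩ : Ent k X) :: (M₂ ++ D))
        have c2 := cnt_cons m (⟨e₁.c + e₀.c, e₁.a, e₁.s, e₁.b⟩ : Ent k X) (M₂ ++ D)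
        have c3 := cnt_append m M₂ D
        have c5 := cnt_append m M₁ M₂
        have hif : (if (⟨e₁.c + e₀.c, e₁.a, e₁.s, e₁.b⟩ : Ent k X).c ≠ 0 ∧
            ekey (⟨e₁.c + e₀.c, e₁.a, e₁.s, e₁.b⟩ : Ent k X) = m then 1 else 0) ≤ 1 := by
          split <;> omega
        omega
      have hres := ihn (M₁ ++ (⟨e₁.c + e₀.c, e₁.a, e₁.s, e₁.b⟩ : Ent k X) :: (M₂ ++ D))
        hcnt'' hbounds (by rwa [hval''])
      rwa [hval''] at hres

end Crux


/-! ### lead containment and reduction -/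

section Main
variable {S : Set (MonoidAlgebra k (FreeMonoid X))} [WellFoundedLT (FreeMonoid X)]
variable (hmono : ∀ u v w₁ w₂ : FreeMonoid X, u < v → w₁ * u * w₂ < w₁ * v * w₂)
variable (hS : ∀ s ∈ S, IsMonic s)

include hmono hS in
lemma lead_containment (hgsb : IsGroebnerShirshovBasis S)
    {g : MonoidAlgebra k (FreeMonoid X)} (hg : g ∈ idealOfSet S) (hg0 : g ≠ 0) :
    ∃ s ∈ S, ∃ a b : FreeMonoid X, leadWord g = a * leadWord s * b := by
  rw [ideal_eq_Tall] at hg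
  have hg' : g ∈ Submodule.span k
      {x : MonoidAlgebra k (FreeMonoid X) |
        ∃ a b : FreeMonoid X, ∃ s ∈ S,
          x = MonoidAlgebra.of k (FreeMonoid X) a * s * MonoidAlgebra.of k (FreeMonoid X) b ∧
            True} := by
    refine Submodule.span_mono ?_ hg
    rintro x ⟨a, b, s, hs, hx⟩
    exact ⟨a, b, s, hs, hx, trivial⟩
  obtain ⟨L, hL, rfl⟩ := span_to_list (S := S) (R := fun _ _ _ => True) hg'
  have hne : L ≠ [] := by rintro rfl; exact hg0 rfl
  obtain ⟨e₀, _, hmax⟩ := exists_max L hne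
  exact crux hmono hgsb hS (ekey e₀) L (fun e he => ⟨(hL e he).1, hmax e he⟩) hg0

include hmono hS in
lemma red : ∀ (w : FreeMonoid X) (f : MonoidAlgebra k (FreeMonoid X)),
    (f ≠ 0 → leadWord f ≤ w) → f ∈ IrrSpan S ⊔ Tle S w := by
  intro w
  induction w using WellFoundedLT.induction with
  | ind w IH =>
  intro f hf
  by_cases hf0 : f = 0
  · rw [hf0]; exact Submodule.zero_mem _
  have hlw := hf hf0
  have hsub : ∀ (p : MonoidAlgebra k (FreeMonoid X)),
      (∀ u ∈ p.coeff.support, u ≤ leadWord f) → p.coeff (leadWord f) = 1 →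
      f - f.coeff (leadWord f) • p ∈ IrrSpan S ⊔ Tle S w := by
    intro p hps hpl
    set f' := f - f.coeff (leadWord f) • p with hf'
    have hlt : ∀ u ∈ f'.coeff.support, u < leadWord f := by
      intro u hu
      have hne : u ≠ leadWord f := by
        intro heq
        subst heq
        rw [Finsupp.mem_support_iff, hf', MonoidAlgebra.coeff_sub, Finsupp.sub_apply,
          MonoidAlgebra.coeff_smul, Finsupp.smul_apply, hpl,
          smul_eq_mul, mul_one, sub_self] at hu
        exact hu rfl
      refine lt_of_le_of_ne ?_ hne
      rw [hf', MonoidAlgebra.coeff_sub, MonoidAlgebra.coeff_smul] at hu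
      rcases Finset.mem_union.1 (Finsupp.support_sub hu) with h | h
      · exact le_lw h
      · exact hps u (Finsupp.support_smul h)
    by_cases h0 : f' = 0
    · rw [h0]; exact Submodule.zero_mem _
    have hlt' : leadWord f' < leadWord f := hlt _ (lw_mem h0)
    have hres := IH (leadWord f') (lt_of_lt_of_le hlt' hlw) f' (fun _ => le_rfl)
    exact sup_le_sup_left (α := Submodule k (MonoidAlgebra k (FreeMonoid X))) (Tle_mono ((hlt'.le.trans hlw))) _ hres
  by_cases hv : leadWord f ∈ IrrSet S
  · have hps : ∀ u ∈ (MonoidAlgebra.single (leadWord f) (1:k)).coeff.support, u ≤ leadWord f := by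
      intro u hu
      rcases Finset.mem_singleton.1 (Finsupp.support_single_subset hu) with rfl
      exact le_rfl
    have h1 := hsub (MonoidAlgebra.single (leadWord f) 1) hps (by simp)
    have h2 : MonoidAlgebra.single (leadWord f) (1:k) ∈ IrrSpan S ⊔ Tle S w :=
      le_sup_left (α := Submodule k (MonoidAlgebra k (FreeMonoid X)))
        (Submodule.subset_span ⟨leadWord f, hv, rfl⟩)
    have : f = (f - f.coeff (leadWord f) • MonoidAlgebra.single (leadWord f) 1) +
        f.coeff (leadWord f) • MonoidAlgebra.single (leadWord f) 1 := by abel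
    rw [this]
    exact Submodule.add_mem _ h1 (Submodule.smul_mem _ _ h2)
  · simp only [IrrSet, Set.mem_setOf_eq, not_not] at hv
    obtain ⟨s, hs, a, b, hab⟩ := hv
    have hps : ∀ u ∈ (MonoidAlgebra.single a (1:k) * s * MonoidAlgebra.single b 1).coeff.support,
        u ≤ leadWord f := by
      intro u hu
      rw [sandwich_support] at hu
      rcases Finset.mem_image.1 hu with ⟨v, hv', rfl⟩
      rw [hab]
      exact mono_le hmono (le_lw hv') a b
    have hpl : (MonoidAlgebra.single a (1:k) * s * MonoidAlgebra.single b 1 :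
        MonoidAlgebra k (FreeMonoid X)).coeff (leadWord f) = 1 := by
      rw [hab, sandwich_apply]
      exact hS s hs
    have h1 := hsub _ hps hpl
    have h2 : MonoidAlgebra.single a (1:k) * s * MonoidAlgebra.single b 1 ∈
        IrrSpan S ⊔ Tle S w :=
      le_sup_right (α := Submodule k (MonoidAlgebra k (FreeMonoid X)))
        (Submodule.subset_span ⟨a, b, s, hs, rfl, by rw [← hab]; exact hlw⟩)
    have : f = (f - f.coeff (leadWord f) • (MonoidAlgebra.single a (1:k) * s *
        MonoidAlgebra.single b 1)) + f.coeff (leadWord f) •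
        (MonoidAlgebra.single a (1:k) * s * MonoidAlgebra.single b 1) := by abel
    rw [this]
    exact Submodule.add_mem _ h1 (Submodule.smul_mem _ _ h2)

end Main


/-! ### assembling the two directions -/

section Assemble
variable {S : Set (MonoidAlgebra k (FreeMonoid X))} [WellFoundedLT (FreeMonoid X)]
variable (hmono : ∀ u v w₁ w₂ : FreeMonoid X, u < v → w₁ * u * w₂ < w₁ * v * w₂)
variable (hS : ∀ s ∈ S, IsMonic s)

lemma mk_mapDomain (l : IrrSet S →₀ k) :
    Submodule.Quotient.mk (p := idealOfSet S)
        (MonoidAlgebra.ofCoeff (Finsupp.mapDomain (fun u : IrrSet S => (u : FreeMonoid X)) l)) =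
      Finsupp.linearCombination k (fun u : IrrSet S =>
        Submodule.Quotient.mk (p := idealOfSet S)
          (MonoidAlgebra.of k (FreeMonoid X) (u : FreeMonoid X))) l := by
  induction l using Finsupp.induction_linear with
  | zero => simp
  | add f g hf hg =>
      rw [Finsupp.mapDomain_add, MonoidAlgebra.ofCoeff_add, Submodule.Quotient.mk_add, map_add, hf, hg]
  | single u c =>
      rw [Finsupp.mapDomain_single, Finsupp.linearCombination_single, MonoidAlgebra.ofCoeff_single]
      rw [show (MonoidAlgebra.single (↑u : FreeMonoid X) c : MonoidAlgebra k (FreeMonoid X)) =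
          c • MonoidAlgebra.of k (FreeMonoid X) (↑u : FreeMonoid X) from by
        rw [of_eq_single]
        rw [show c • (MonoidAlgebra.single (↑u : FreeMonoid X) (1:k)) =
          MonoidAlgebra.single (↑u : FreeMonoid X) (c * 1) from MonoidAlgebra.smul_single' c _ 1]
        rw [mul_one]]
      rw [Submodule.Quotient.mk_smul]

lemma mapDomain_subtype {p : FreeMonoid X → Prop} {r : MonoidAlgebra k (FreeMonoid X)}
    (hr : ∀ u ∈ r.coeff.support, p u) :
    MonoidAlgebra.ofCoeff (Finsupp.mapDomain (fun u : {x // p x} => (u : FreeMonoid X))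
      (Finsupp.subtypeDomain p r.coeff)) = r := by
  apply MonoidAlgebra.coeff_injective
  rw [MonoidAlgebra.coeff_ofCoeff]
  ext x
  by_cases hx : p x
  · have hxe : x = ((⟨x, hx⟩ : {x // p x}) : FreeMonoid X) := rfl
    rw [hxe, Finsupp.mapDomain_apply Subtype.coe_injective, Finsupp.subtypeDomain_apply]
  · have h1 : r.coeff x = 0 := by
      by_contra h
      exact hx (hr x (Finsupp.mem_support_iff.2 h))
    rw [h1]
    by_contra h
    have hx' := Finsupp.mem_support_iff.2 h
    obtain ⟨u, _, hux⟩ := Finset.mem_image.1 (Finsupp.mapDomain_support hx')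
    exact hx (hux ▸ u.2)

include hmono hS in
lemma li_of_gsb (hgsb : IsGroebnerShirshovBasis S) :
    LinearIndependent k (fun u : IrrSet S =>
      Submodule.Quotient.mk (p := idealOfSet S)
        (MonoidAlgebra.of k (FreeMonoid X) (u : FreeMonoid X))) := by
  rw [linearIndependent_iff]
  intro l hl
  have hmk : Submodule.Quotient.mk (p := idealOfSet S)
      (MonoidAlgebra.ofCoeff (Finsupp.mapDomain (fun u : IrrSet S => (u : FreeMonoid X)) l)) = 0 := by
    rw [mk_mapDomain]; exact hl
  have hmem := (Submodule.Quotient.mk_eq_zero _).1 hmk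
  by_cases hg0 : MonoidAlgebra.ofCoeff (Finsupp.mapDomain (fun u : IrrSet S => (u : FreeMonoid X)) l) = 0
  · exact Finsupp.mapDomain_injective Subtype.coe_injective
      ((MonoidAlgebra.ofCoeff_eq_zero.1 hg0).trans Finsupp.mapDomain_zero.symm)
  · exfalso
    obtain ⟨s, hs, a, b, hab⟩ := lead_containment hmono hS hgsb hmem hg0
    have hirr : leadWord (MonoidAlgebra.ofCoeff (Finsupp.mapDomain (fun u : IrrSet S => (u : FreeMonoid X)) l)) ∈
        IrrSet S := by
      obtain ⟨u, _, hux⟩ := Finset.mem_image.1 (Finsupp.mapDomain_support (lw_mem hg0))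
      exact hux ▸ u.2
    exact hirr ⟨s, hs, a, b, hab⟩

include hmono hS in
lemma span_top : Submodule.span k (Set.range (fun u : IrrSet S =>
    Submodule.Quotient.mk (p := idealOfSet S)
      (MonoidAlgebra.of k (FreeMonoid X) (u : FreeMonoid X)))) = ⊤ := by
  rw [eq_top_iff]
  rintro x -
  obtain ⟨f, rfl⟩ := Submodule.Quotient.mk_surjective _ x
  obtain ⟨r, hr, t, ht, hrt⟩ :=
    Submodule.mem_sup.1 (red hmono hS (leadWord f) f (fun _ => le_rfl))
  have htz : Submodule.Quotient.mk (p := idealOfSet S) t = 0 :=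
    (Submodule.Quotient.mk_eq_zero _).2 (Tall_le_ideal (Tle_le_Tall ht))
  have hfr : Submodule.Quotient.mk (p := idealOfSet S) f =
      Submodule.Quotient.mk (p := idealOfSet S) r := by
    rw [← hrt, Submodule.Quotient.mk_add, htz, add_zero]
  rw [hfr]
  have hmap : Submodule.Quotient.mk (p := idealOfSet S) r ∈
      Submodule.map (idealOfSet S).mkQ (IrrSpan S) :=
    ⟨r, hr, Submodule.mkQ_apply _ _⟩
  have hle : Submodule.map (idealOfSet S).mkQ (IrrSpan S) ≤
      Submodule.span k (Set.range (fun u : IrrSet S =>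
        Submodule.Quotient.mk (p := idealOfSet S)
          (MonoidAlgebra.of k (FreeMonoid X) (u : FreeMonoid X)))) := by
    rw [IrrSpan, Submodule.map_span]
    apply Submodule.span_le.2
    rintro y ⟨z, ⟨u, hu, rfl⟩, rfl⟩
    exact Submodule.subset_span ⟨⟨u, hu⟩, (Submodule.mkQ_apply _ _)⟩
  exact hle hmap

include hmono hS in
lemma key_conv (hli : LinearIndependent k (fun u : IrrSet S =>
      Submodule.Quotient.mk (p := idealOfSet S)
        (MonoidAlgebra.of k (FreeMonoid X) (u : FreeMonoid X))))
    {h : MonoidAlgebra k (FreeMonoid X)} {w : FreeMonoid X}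
    (hmem : h ∈ idealOfSet S) (hsupp : ∀ u ∈ h.coeff.support, u < w) : h ∈ Tlt S w := by
  by_cases h0 : h = 0
  · rw [h0]; exact Submodule.zero_mem _
  obtain ⟨r, hr, t, ht, hrt⟩ :=
    Submodule.mem_sup.1 (red hmono hS (leadWord h) h (fun _ => le_rfl))
  have hrideal : r ∈ idealOfSet S := by
    have h1 : t ∈ idealOfSet S := Tall_le_ideal (Tle_le_Tall ht)
    have h2 : r = h - t := by rw [← hrt]; abel
    rw [h2]
    exact Submodule.sub_mem _ hmem h1
  have hrsupp := IrrSpan_supported hr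
  have hml : MonoidAlgebra.ofCoeff (Finsupp.mapDomain (fun u : IrrSet S => (u : FreeMonoid X))
      (Finsupp.subtypeDomain (· ∈ IrrSet S) r.coeff)) = r := mapDomain_subtype hrsupp
  have hlc : Finsupp.linearCombination k (fun u : IrrSet S =>
      Submodule.Quotient.mk (p := idealOfSet S)
        (MonoidAlgebra.of k (FreeMonoid X) (u : FreeMonoid X)))
      (Finsupp.subtypeDomain (· ∈ IrrSet S) r.coeff) = 0 := by
    rw [← mk_mapDomain, hml]
    exact (Submodule.Quotient.mk_eq_zero _).2 hrideal
  have hl0 := linearIndependent_iff.1 hli _ hlc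
  have hr0 : r = 0 := by rw [← hml, hl0, Finsupp.mapDomain_zero, MonoidAlgebra.ofCoeff_zero]
  have hht : h = t := by rw [← hrt, hr0, zero_add]
  have hlww : leadWord h < w := hsupp _ (lw_mem h0)
  rw [hht]
  exact Tle_le_Tlt hlww ht

include hmono hS in
lemma gsb_of_basis (hli : LinearIndependent k (fun u : IrrSet S =>
      Submodule.Quotient.mk (p := idealOfSet S)
        (MonoidAlgebra.of k (FreeMonoid X) (u : FreeMonoid X)))) :
    IsGroebnerShirshovBasis S := by
  constructor
  · intro f hf g hg a b w hw1 hw2 _hlen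
    show f * MonoidAlgebra.of k (FreeMonoid X) b - MonoidAlgebra.of k (FreeMonoid X) a * g
      ∈ Tlt S w
    apply key_conv hmono hS hli
    · refine Submodule.sub_mem _ ?_ ?_
      · exact Submodule.subset_span ⟨1, MonoidAlgebra.of k (FreeMonoid X) b, f, hf,
          by rw [one_mul]⟩
      · exact Submodule.subset_span ⟨MonoidAlgebra.of k (FreeMonoid X) a, 1, g, hg,
          by rw [mul_one]⟩
    · intro u hu
      have e1 : f * MonoidAlgebra.of k (FreeMonoid X) b =
          MonoidAlgebra.single (1 : FreeMonoid X) (1:k) * f * MonoidAlgebra.single b 1 := by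
        rw [of_eq_single, ← MonoidAlgebra.one_def, one_mul]
      have e2 : MonoidAlgebra.of k (FreeMonoid X) a * g =
          MonoidAlgebra.single a (1:k) * g * MonoidAlgebra.single (1 : FreeMonoid X) 1 := by
        rw [of_eq_single, ← MonoidAlgebra.one_def, mul_one]
      have hww1 : (1 : FreeMonoid X) * leadWord f * b = w := by rw [one_mul, ← hw1]
      have hww2 : a * leadWord g * (1 : FreeMonoid X) = w := by rw [mul_one, ← hw2]
      refine lt_of_le_of_ne ?_ ?_
      · rcases Finset.mem_union.1 (Finsupp.support_sub (by rw [MonoidAlgebra.coeff_sub] at hu; exact hu)) with hu' | hu'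
        · rw [e1, sandwich_support] at hu'
          obtain ⟨v, hv, rfl⟩ := Finset.mem_image.1 hu'
          calc (1 : FreeMonoid X) * v * b ≤ 1 * leadWord f * b := mono_le hmono (le_lw hv) 1 b
            _ = w := hww1
        · rw [e2, sandwich_support] at hu'
          obtain ⟨v, hv, rfl⟩ := Finset.mem_image.1 hu'
          calc a * v * (1 : FreeMonoid X) ≤ a * leadWord g * 1 := mono_le hmono (le_lw hv) a 1
            _ = w := hww2
      · intro heq
        subst heq
        have hv1 : (f * MonoidAlgebra.of k (FreeMonoid X) b).coeff u = 1 := by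
          rw [e1, ← hww1, sandwich_apply]
          exact hS f hf
        have hv2 : (MonoidAlgebra.of k (FreeMonoid X) a * g).coeff u = 1 := by
          rw [e2, ← hww2, sandwich_apply]
          exact hS g hg
        have : (f * MonoidAlgebra.of k (FreeMonoid X) b -
            MonoidAlgebra.of k (FreeMonoid X) a * g).coeff u = 0 := by
          rw [MonoidAlgebra.coeff_sub, Finsupp.sub_apply, hv1, hv2, sub_self]
        exact (Finsupp.mem_support_iff.1 hu) this
  · intro f hf g hg a b hab
    show f - MonoidAlgebra.of k (FreeMonoid X) a * g * MonoidAlgebra.of k (FreeMonoid X) b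
      ∈ Tlt S (leadWord f)
    apply key_conv hmono hS hli
    · refine Submodule.sub_mem _ ?_ ?_
      · exact Submodule.subset_span ⟨1, 1, f, hf, by rw [one_mul, mul_one]⟩
      · exact Submodule.subset_span ⟨MonoidAlgebra.of k (FreeMonoid X) a,
          MonoidAlgebra.of k (FreeMonoid X) b, g, hg, rfl⟩
    · intro u hu
      refine lt_of_le_of_ne ?_ ?_
      · rcases Finset.mem_union.1 (Finsupp.support_sub (by rw [MonoidAlgebra.coeff_sub] at hu; exact hu)) with hu' | hu'
        · exact le_lw hu'
        · rw [of_eq_single, of_eq_single, sandwich_support] at hu'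
          obtain ⟨v, hv, rfl⟩ := Finset.mem_image.1 hu'
          calc a * v * b ≤ a * leadWord g * b := mono_le hmono (le_lw hv) a b
            _ = leadWord f := hab.symm
      · intro heq
        have hv1 : f.coeff (leadWord f) = 1 := hS f hf
        have hv2 : (MonoidAlgebra.of k (FreeMonoid X) a * g *
            MonoidAlgebra.of k (FreeMonoid X) b).coeff (leadWord f) = 1 := by
          rw [of_eq_single, of_eq_single, hab, sandwich_apply]
          exact hS g hg
        have hzz : (f - MonoidAlgebra.of k (FreeMonoid X) a * g *
            MonoidAlgebra.of k (FreeMonoid X) b).coeff (leadWord f) = 0 := by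
          rw [MonoidAlgebra.coeff_sub, Finsupp.sub_apply, hv1, hv2, sub_self]
        rw [heq] at hu
        exact (Finsupp.mem_support_iff.1 hu) hzz

end Assemble

end CDLAux

/-- **Composition–Diamond Lemma.**  Let `k` be a field, `<` a monomial well-order on `X*`
and `S` a set of monic elements of `k⟨X⟩`.  Then `S` is a Gröbner–Shirshov basis if and only
if the image of `Irr(S)` in `k⟨X⟩/Id(S)` is a `k`-linear basis of `k⟨X⟩/Id(S)`. -/
theorem composition_diamond_lemma [WellFoundedLT (FreeMonoid X)]
    (hmono : ∀ u v w₁ w₂ : FreeMonoid X, u < v → w₁ * u * w₂ < w₁ * v * w₂)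
    (S : Set (MonoidAlgebra k (FreeMonoid X))) (hS : ∀ s ∈ S, IsMonic s) :
    IsGroebnerShirshovBasis S ↔
      (LinearIndependent k (fun u : IrrSet S =>
          Submodule.Quotient.mk (p := idealOfSet S)
            (MonoidAlgebra.of k (FreeMonoid X) (u : FreeMonoid X))) ∧
        Submodule.span k (Set.range (fun u : IrrSet S =>
          Submodule.Quotient.mk (p := idealOfSet S)
            (MonoidAlgebra.of k (FreeMonoid X) (u : FreeMonoid X)))) = ⊤) := by
  constructor
  · intro hgsb
    exact ⟨CDLAux.li_of_gsb hmono hS hgsb, CDLAux.span_top hmono hS⟩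
  · rintro ⟨hli, -⟩
    exact CDLAux.gsb_of_basis hmono hS hli
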